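/- Let L be a full-rank lattice of rank n in a Euclidean space. For every t > 0, ∑_{v∈L} ‖v‖² e^{-πt‖v‖²} ≤ (n/(2πt)) · ∑_{v∈L} e^{-πt‖v‖²}. -/

import Mathlib

open Real Topology Filter

lemma summable_int_exp (a : ℝ) (ha : 0 < a) : Summable fun k : ℤ => Real.exp (-a * (k:ℝ)^2) := by
  rw [summable_int_iff_summable_nat_and_neg]
  constructor <;>
  · refine Summable.of_nonneg_of_le (fun k => (exp_pos _).le) (fun k => ?_)
      (summable_geometric_of_lt_one (exp_nonneg (-a)) (exp_lt_one_iff.2 (by linarith)))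
    rw [← Real.exp_nat_mul]
    apply Real.exp_le_exp.2
    have hk : (k:ℝ) ≤ ((k:ℝ))^2 := by
      rcases Nat.eq_zero_or_pos k with h|h
      · simp [h]
      · have h1 : (1:ℝ) ≤ k := by exact_mod_cast h
        nlinarith
    push_cast
    nlinarith [mul_le_mul_of_nonneg_left hk ha.le]

lemma summable_pi_exp (N : ℕ) (a : ℝ) (ha : 0 < a) :
    Summable fun m : Fin N → ℤ => Real.exp (-a * ∑ i, ((m i : ℝ))^2) := by
  induction N with
  | zero => exact .of_finite
  | succ N ih =>
      have H := ((summable_int_exp a ha).mul_of_nonneg ih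
        (fun k => (exp_pos _).le) (fun m => (exp_pos _).le))
      rw [← (Fin.consEquiv fun _ : Fin (N+1) => ℤ).summable_iff]
      apply H.congr
      intro p
      simp only [Function.comp, Fin.consEquiv_apply]
      rw [← Real.exp_add]
      congr 1
      have : ∀ i, ((Fin.cons p.1 p.2 : Fin (N+1) → ℤ) i : ℝ)^2
          = (Fin.cons ((p.1:ℝ)^2) (fun j => ((p.2 j : ℝ))^2) : Fin (N+1) → ℝ) i := by
        intro i
        refine Fin.cases ?_ (fun j => ?_) i <;> simp
      rw [Finset.sum_congr rfl (fun i _ => this i), Fin.sum_cons]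
      ring

section
variable {V : Type*} [NormedAddCommGroup V] [InnerProductSpace ℝ V]
variable {n : ℕ} (b : Module.Basis (Fin n) ℝ V)

noncomputable def Q (m : Fin n → ℤ) : V := ∑ i, m i • b i

lemma Q_eq (m : Fin n → ℤ) : Q b m = b.equivFun.symm (fun i => (m i : ℝ)) := by
  rw [Module.Basis.equivFun_symm_apply]
  exact Finset.sum_congr rfl fun i _ => (Int.cast_smul_eq_zsmul ℝ (m i) (b i)).symm

lemma Q_add (v w : Fin n → ℤ) : Q b (v + w) = Q b v + Q b w := by
  simp only [Q_eq, ← map_add]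
  congr 1
  ext i
  push_cast
  simp

lemma Q_sub (v w : Fin n → ℤ) : Q b (v - w) = Q b v - Q b w := by
  simp only [Q_eq, ← map_sub]
  congr 1
  ext i
  push_cast
  simp

lemma Q_coords (m : Fin n → ℤ) : b.equivFun (Q b m) = fun i => (m i : ℝ) := by
  rw [Q_eq, LinearEquiv.apply_symm_apply]

lemma exists_coord_bound : ∃ C : ℝ, 0 < C ∧ ∀ m : Fin n → ℤ,
    (∑ i, ((m i : ℝ))^2) ≤ C * ‖Q b m‖^2 := by
  have : FiniteDimensional ℝ V := b.finiteDimensional_of_finite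
  set φ : V →ₗ[ℝ] EuclideanSpace ℝ (Fin n) :=
    ((EuclideanSpace.equiv (Fin n) ℝ).symm.toLinearEquiv.toLinearMap).comp
      b.equivFun.toLinearMap with hφ
  set L := LinearMap.toContinuousLinearMap φ with hL
  refine ⟨‖L‖^2 + 1, by positivity, fun m => ?_⟩
  have h1 : ‖L (Q b m)‖^2 = ∑ i, ((m i : ℝ))^2 := by
    rw [EuclideanSpace.norm_eq, Real.sq_sqrt (by positivity)]
    refine Finset.sum_congr rfl fun i _ => ?_
    have : (L (Q b m)) i = (m i : ℝ) := by
      show (φ (Q b m)) i = _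
      simp only [hφ, LinearMap.comp_apply, LinearEquiv.coe_coe, Q_coords b m]
      rfl
    rw [this, Real.norm_eq_abs, sq_abs]
  have h2 : ‖L (Q b m)‖ ≤ ‖L‖ * ‖Q b m‖ := L.le_opNorm _
  nlinarith [norm_nonneg (L (Q b m)), norm_nonneg (Q b m), norm_nonneg L, sq_nonneg (‖Q b m‖)]

end

section
variable {V : Type*} [NormedAddCommGroup V] [InnerProductSpace ℝ V]
variable {n : ℕ} (b : Module.Basis (Fin n) ℝ V)

noncomputable def gg (s : ℝ) (x : V) (m : Fin n → ℤ) : ℝ := Real.exp (-π * s * ‖Q b m + x‖^2)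

lemma gg_pos (s : ℝ) (x : V) (m : Fin n → ℤ) : 0 < gg b s x m := exp_pos _

lemma norm_add_lower (a z : V) : ‖a‖^2/2 - ‖z‖^2 ≤ ‖a + z‖^2 := by
  have h : ‖a‖ ≤ ‖a + z‖ + ‖z‖ := by
    simpa using norm_add_le (a + z) (-z)
  nlinarith [norm_nonneg a, norm_nonneg (a+z), norm_nonneg z,
    mul_self_le_mul_self (norm_nonneg a) h, sq_nonneg (‖a+z‖ - ‖z‖)]

lemma summable_gg {s : ℝ} (hs : 0 < s) (x : V) : Summable (gg b s x) := by
  obtain ⟨C, hC, hbd⟩ := exists_coord_bound b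
  have hps : 0 < π * s := by positivity
  refine Summable.of_nonneg_of_le (fun m => (gg_pos b s x m).le) (fun m => ?_)
    (((summable_pi_exp n (π * s / (2*C)) (by positivity)).mul_left
      (Real.exp (π * s * ‖x‖^2))))
  rw [gg, ← Real.exp_add]
  apply Real.exp_le_exp.2
  have h1 := norm_add_lower (Q b m) x
  have h2 := hbd m
  have h3 : (∑ i, ((m i:ℝ))^2) / C ≤ ‖Q b m‖^2 := by
    rw [div_le_iff₀ hC]; linarith
  have h5 : π * s / (2*C) * (∑ i, ((m i:ℝ))^2) ≤ π * s / 2 * ‖Q b m‖^2 := by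
    calc π * s / (2*C) * (∑ i, ((m i:ℝ))^2) ≤ π * s / (2*C) * (C * ‖Q b m‖^2) :=
          mul_le_mul_of_nonneg_left h2 (by positivity)
      _ = π * s / 2 * ‖Q b m‖^2 := by field_simp
  linarith [mul_le_mul_of_nonneg_left h1 hps.le]

noncomputable def rho (s : ℝ) (x : V) : ℝ := ∑' m, gg b s x m

lemma rho_pos {s : ℝ} (hs : 0 < s) (x : V) : 0 < rho b s x :=
  Summable.tsum_pos (summable_gg b hs x) (fun m => (gg_pos b s x m).le) 0 (gg_pos b s x 0)

lemma rho_nonneg (s : ℝ) (x : V) : 0 ≤ rho b s x :=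
  tsum_nonneg (fun m => (gg_pos b s x m).le)

lemma rho_periodic (s : ℝ) (x : V) (k : Fin n → ℤ) : rho b s (x + Q b k) = rho b s x := by
  have h1 : rho b s (x + Q b k) = ∑' m, gg b s x (m + k) := by
    refine tsum_congr fun m => ?_
    have h : Q b (m + k) + x = Q b m + (x + Q b k) := by rw [Q_add]; abel
    rw [gg, gg, h]
  rw [h1, rho]
  exact (Equiv.addRight k).tsum_eq (gg b s x)

lemma exists_near (x : V) : ∃ k : Fin n → ℤ, ‖x + Q b k‖ ≤ ∑ i, ‖b i‖ := by
  refine ⟨fun i => -(round (b.repr x i)), ?_⟩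
  have hx : x + Q b (fun i => -(round (b.repr x i)))
      = ∑ i, (b.repr x i - (round (b.repr x i) : ℝ)) • b i := by
    nth_rewrite 1 [← b.sum_repr x]
    rw [Q, ← Finset.sum_add_distrib]
    refine Finset.sum_congr rfl fun i _ => ?_
    rw [← Int.cast_smul_eq_zsmul ℝ, ← add_smul]
    push_cast
    ring_nf
  rw [hx]
  calc ‖∑ i, (b.repr x i - (round (b.repr x i) : ℝ)) • b i‖
      ≤ ∑ i, ‖(b.repr x i - (round (b.repr x i) : ℝ)) • b i‖ := norm_sum_le _ _
    _ ≤ ∑ i, ‖b i‖ := by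
        refine Finset.sum_le_sum fun i _ => ?_
        rw [norm_smul, Real.norm_eq_abs]
        calc |b.repr x i - (round (b.repr x i) : ℝ)| * ‖b i‖ ≤ (1/2) * ‖b i‖ :=
              mul_le_mul_of_nonneg_right (abs_sub_round _) (norm_nonneg _)
          _ ≤ ‖b i‖ := by linarith [norm_nonneg (b i)]

lemma rho_le_of_small {s : ℝ} (hs : 0 < s) {D : ℝ} {z : V} (hz : ‖z‖ ≤ D) :
    rho b s z ≤ Real.exp (π * s * D^2) * rho b (s/2) 0 := by
  rw [rho, rho, ← tsum_mul_left]
  refine Summable.tsum_le_tsum (fun m => ?_) (summable_gg b hs z)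
    ((summable_gg b (by linarith : (0:ℝ) < s/2) 0).mul_left _)
  rw [gg, gg, ← Real.exp_add]
  apply Real.exp_le_exp.2
  have h1 := norm_add_lower (Q b m) z
  have hD : ‖z‖^2 ≤ D^2 := by nlinarith [norm_nonneg z]
  have hps : (0:ℝ) < π * s := by positivity
  have : ‖Q b m + 0‖^2 = ‖Q b m‖^2 := by rw [add_zero]
  rw [this]
  nlinarith [mul_le_mul_of_nonneg_left h1 hps.le]

lemma rho_le_uniform {s : ℝ} (hs : 0 < s) (x : V) :
    rho b s x ≤ Real.exp (π * s * (∑ i, ‖b i‖)^2) * rho b (s/2) 0 := by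
  obtain ⟨k, hk⟩ := exists_near b x
  rw [← rho_periodic b s x k]
  exact rho_le_of_small b hs hk

def cls (m : Fin n → ℤ) : Fin n → ZMod 2 := fun i => (m i : ZMod 2)

noncomputable def uu (s : ℝ) (x : V) (c : Fin n → ZMod 2) : ℝ :=
  ∑' p, (if cls p = c then gg b s x p else 0)

noncomputable def W (s : ℝ) (x y : V) : ℝ :=
  ∑' pq : (Fin n → ℤ) × (Fin n → ℤ),
    (if cls pq.1 = cls pq.2 then gg b s x pq.1 * gg b s y pq.2 else 0)

lemma summable_pair {s : ℝ} (hs : 0 < s) (x y : V) :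
    Summable (fun pq : (Fin n → ℤ) × (Fin n → ℤ) => gg b s x pq.1 * gg b s y pq.2) :=
  (summable_gg b hs x).mul_of_nonneg (summable_gg b hs y)
    (fun m => (gg_pos b s x m).le) (fun m => (gg_pos b s y m).le)

lemma summable_W {s : ℝ} (hs : 0 < s) (x y : V) :
    Summable (fun pq : (Fin n → ℤ) × (Fin n → ℤ) =>
      if cls pq.1 = cls pq.2 then gg b s x pq.1 * gg b s y pq.2 else 0) := by
  refine Summable.of_nonneg_of_le (fun pq => ?_) (fun pq => ?_) (summable_pair b hs x y)
  · split
    · exact mul_nonneg (gg_pos b s x _).le (gg_pos b s y _).le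
    · exact le_refl 0
  · split
    · exact le_refl _
    · exact mul_nonneg (gg_pos b s x _).le (gg_pos b s y _).le

lemma summable_ind {s : ℝ} (hs : 0 < s) (x : V) (c : Fin n → ZMod 2) :
    Summable (fun p => if cls p = c then gg b s x p else 0) := by
  refine Summable.of_nonneg_of_le (fun p => ?_) (fun p => ?_) (summable_gg b hs x)
  · split
    · exact (gg_pos b s x _).le
    · exact le_refl 0
  · split
    · exact le_refl _
    · exact (gg_pos b s x _).le

lemma uu_nonneg (s : ℝ) (x : V) (c : Fin n → ZMod 2) : 0 ≤ uu b s x c := by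
  refine tsum_nonneg fun p => ?_
  split
  · exact (gg_pos b s x _).le
  · exact le_refl 0

lemma core1 {s : ℝ} (hs : 0 < s) (x y : V) :
    rho b s x * rho b s y = W b (s/2) (x + y) (x - y) := by
  classical
  set Φ : (Fin n → ℤ) × (Fin n → ℤ) → (Fin n → ℤ) × (Fin n → ℤ) :=
    fun vw => (vw.1 + vw.2, vw.1 - vw.2) with hΦ
  set f : (Fin n → ℤ) × (Fin n → ℤ) → ℝ := fun pq =>
    if cls pq.1 = cls pq.2 then gg b (s/2) (x+y) pq.1 * gg b (s/2) (x-y) pq.2 else 0 with hf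
  have h1 : rho b s x * rho b s y
      = ∑' vw : (Fin n → ℤ) × (Fin n → ℤ), gg b s x vw.1 * gg b s y vw.2 := by
    rw [Summable.tsum_prod (summable_pair b hs x y), rho, rho, ← tsum_mul_right]
    exact tsum_congr fun v => tsum_mul_left.symm
  have key : ∀ vw : (Fin n → ℤ) × (Fin n → ℤ),
      gg b s x vw.1 * gg b s y vw.2 = f (Φ vw) := by
    rintro ⟨v, w⟩
    have hpar : cls (v + w) = cls (v - w) := by
      funext i
      show ((v i + w i : ℤ) : ZMod 2) = ((v i - w i : ℤ) : ZMod 2)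
      push_cast
      rw [sub_eq_add_neg, CharTwo.neg_eq]
    have hA : Q b (v + w) + (x + y) = (Q b v + x) + (Q b w + y) := by rw [Q_add]; abel
    have hB : Q b (v - w) + (x - y) = (Q b v + x) - (Q b w + y) := by rw [Q_sub]; abel
    have hP := parallelogram_law_with_norm ℝ (Q b v + x) (Q b w + y)
    have hP' : ‖(Q b v + x) + (Q b w + y)‖^2 + ‖(Q b v + x) - (Q b w + y)‖^2
        = 2 * (‖Q b v + x‖^2 + ‖Q b w + y‖^2) := by
      simpa [sq] using hP
    show _ = if _ then _ else _
    rw [if_pos hpar]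
    show Real.exp _ * Real.exp _ = Real.exp _ * Real.exp _
    rw [← Real.exp_add, ← Real.exp_add, hA, hB]
    congr 1
    linear_combination ((π * s)/2) * hP'
  have hinj : Function.Injective Φ := by
    rintro ⟨v, w⟩ ⟨v', w'⟩ h
    simp only [hΦ, Prod.mk.injEq] at h
    obtain ⟨h1', h2'⟩ := h
    have hv : v = v' := by
      funext i
      have e1 := congrFun h1' i
      have e2 := congrFun h2' i
      simp only [Pi.add_apply, Pi.sub_apply] at e1 e2
      omega
    have hw : w = w' := by
      funext i
      have e1 := congrFun h1' i
      have e2 := congrFun h2' i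
      simp only [Pi.add_apply, Pi.sub_apply] at e1 e2
      omega
    rw [hv, hw]
  have hsupp : Function.support f ⊆ Set.range Φ := by
    intro pq hpq
    have hcls : cls pq.1 = cls pq.2 := by
      by_contra hc
      exact hpq (if_neg hc)
    have hdvd : ∀ i, (2:ℤ) ∣ pq.1 i - pq.2 i := by
      intro i
      have := congrFun hcls i
      have h0 : ((pq.1 i - pq.2 i : ℤ) : ZMod 2) = 0 := by
        push_cast
        rw [sub_eq_zero]
        exact this
      exact_mod_cast (ZMod.intCast_zmod_eq_zero_iff_dvd _ 2).1 h0
    refine ⟨(fun i => (pq.1 i + pq.2 i)/2, fun i => (pq.1 i - pq.2 i)/2), ?_⟩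
    have h1' : (fun i => (pq.1 i + pq.2 i)/2) + (fun i => (pq.1 i - pq.2 i)/2) = pq.1 := by
      funext i
      have := hdvd i
      simp only [Pi.add_apply]
      omega
    have h2' : (fun i => (pq.1 i + pq.2 i)/2) - (fun i => (pq.1 i - pq.2 i)/2) = pq.2 := by
      funext i
      have := hdvd i
      simp only [Pi.sub_apply]
      omega
    simp only [hΦ]
    rw [h1', h2']
  rw [h1, tsum_congr key, hinj.tsum_eq hsupp]
  rfl

lemma W_eq_sum (s : ℝ) (hs : 0 < s) (x y : V) :
    W b s x y = ∑ c : Fin n → ZMod 2, uu b s x c * uu b s y c := by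
  classical
  have h1 : W b s x y = ∑' p, gg b s x p * uu b s y (cls p) := by
    rw [W, Summable.tsum_prod (summable_W b hs x y)]
    refine tsum_congr fun p => ?_
    rw [uu, ← tsum_mul_left]
    refine tsum_congr fun q => ?_
    rw [mul_ite, mul_zero]
    exact if_congr eq_comm rfl rfl
  have h2 : ∀ p, gg b s x p * uu b s y (cls p)
      = ∑ c : Fin n → ZMod 2, (if cls p = c then gg b s x p else 0) * uu b s y c := by
    intro p
    rw [Finset.sum_congr rfl (fun c _ => by rw [ite_mul, zero_mul]),
      Finset.sum_ite_eq Finset.univ (cls p) (fun c => gg b s x p * uu b s y c),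
      if_pos (Finset.mem_univ _)]
  rw [h1, tsum_congr h2, Summable.tsum_finsetSum (fun c _ => ((summable_ind b hs x c).mul_right _))]
  exact Finset.sum_congr rfl fun c _ => tsum_mul_right

lemma W_CS {s : ℝ} (hs : 0 < s) (x y : V) :
    W b s x y ≤ Real.sqrt (W b s x x) * Real.sqrt (W b s y y) := by
  rw [W_eq_sum b s hs x y, W_eq_sum b s hs x x, W_eq_sum b s hs y y]
  have hnn : 0 ≤ ∑ c : Fin n → ZMod 2, uu b s x c * uu b s y c :=
    Finset.sum_nonneg fun c _ => mul_nonneg (uu_nonneg b s x c) (uu_nonneg b s y c)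
  have hcs := Finset.sum_mul_sq_le_sq_mul_sq Finset.univ (uu b s x) (uu b s y)
  calc ∑ c : Fin n → ZMod 2, uu b s x c * uu b s y c
      = Real.sqrt ((∑ c : Fin n → ZMod 2, uu b s x c * uu b s y c)^2) :=
        (Real.sqrt_sq hnn).symm
    _ ≤ Real.sqrt ((∑ c : Fin n → ZMod 2, uu b s x c^2)
          * ∑ c : Fin n → ZMod 2, uu b s y c^2) := Real.sqrt_le_sqrt hcs
    _ = Real.sqrt (∑ c : Fin n → ZMod 2, uu b s x c * uu b s x c)
          * Real.sqrt (∑ c : Fin n → ZMod 2, uu b s y c * uu b s y c) := by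
        rw [Real.sqrt_mul (Finset.sum_nonneg fun c _ => sq_nonneg _)]
        have hx' : ∀ z : V, ∑ c : Fin n → ZMod 2, uu b s z c^2
            = ∑ c : Fin n → ZMod 2, uu b s z c * uu b s z c :=
          fun z => Finset.sum_congr rfl fun c _ => pow_two _
        rw [hx' x, hx' y]

lemma rho_sq_rec {s : ℝ} (hs : 0 < s) (x : V) :
    rho b s x ^ 2 ≤ Real.sqrt (rho b s (x + x) * rho b s 0) * rho b s 0 := by
  have hs2 : (0:ℝ) < s/2 := by linarith
  have e1 : rho b s x * rho b s x = W b (s/2) (x + x) 0 := by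
    have := core1 b hs x x
    rwa [sub_self] at this
  have e2 : rho b s (x+x) * rho b s 0 = W b (s/2) (x + x) (x + x) := by
    have := core1 b hs (x + x) 0
    rwa [add_zero, sub_zero] at this
  have e3 : rho b s 0 * rho b s 0 = W b (s/2) 0 0 := by
    have := core1 b hs 0 0
    rwa [add_zero, sub_zero] at this
  calc rho b s x ^ 2 = W b (s/2) (x + x) 0 := by rw [sq, e1]
    _ ≤ Real.sqrt (W b (s/2) (x+x) (x+x)) * Real.sqrt (W b (s/2) 0 0) := W_CS b hs2 _ _
    _ = Real.sqrt (rho b s (x + x) * rho b s 0) * rho b s 0 := by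
        rw [← e2, ← e3, Real.sqrt_mul_self (rho_nonneg b s 0)]

lemma rho_le_rho_zero {s : ℝ} (hs : 0 < s) (x : V) : rho b s x ≤ rho b s 0 := by
  set ρ0 := rho b s 0 with hρ0
  have hρ0pos : 0 < ρ0 := rho_pos b hs 0
  set g : V → ℝ := fun y => rho b s y / ρ0 with hg
  have hgnn : ∀ y, 0 ≤ g y := fun y => div_nonneg (rho_nonneg b s y) hρ0pos.le
  set C : ℝ := max (Real.exp (π * s * (∑ i, ‖b i‖)^2) * rho b (s/2) 0 / ρ0) 1 with hC
  have hC1 : 1 ≤ C := le_max_right _ _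
  have hCpos : 0 < C := lt_of_lt_of_le one_pos hC1
  have hgC : ∀ y, g y ≤ C := fun y => le_trans
    (div_le_div_of_nonneg_right (rho_le_uniform b hs y) hρ0pos.le) (le_max_left _ _)
  have hrec : ∀ y, g y ^ 2 ≤ Real.sqrt (g (y + y)) := by
    intro y
    have h := rho_sq_rec b hs y
    have hsq : Real.sqrt (rho b s (y+y) * ρ0) / ρ0 = Real.sqrt (g (y+y)) := by
      rw [hg]
      rw [Real.sqrt_div (rho_nonneg b s (y+y)), Real.sqrt_mul (rho_nonneg b s (y+y))]
      rw [div_eq_div_iff hρ0pos.ne' (Real.sqrt_pos.2 hρ0pos).ne']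
      rw [mul_assoc, Real.mul_self_sqrt hρ0pos.le]
    calc g y ^ 2 = rho b s y ^ 2 / ρ0 ^ 2 := by rw [hg, div_pow]
      _ ≤ (Real.sqrt (rho b s (y+y) * ρ0) * ρ0) / ρ0 ^ 2 :=
          div_le_div_of_nonneg_right h (by positivity)
      _ = Real.sqrt (rho b s (y+y) * ρ0) / ρ0 := by
          field_simp
      _ = Real.sqrt (g (y+y)) := hsq
  have main : ∀ k : ℕ, ∀ y, g y ≤ C ^ (((1:ℝ)/4) ^ k) := by
    intro k
    induction k with
    | zero =>
        intro y
        simpa using hgC y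
    | succ k ih =>
        intro y
        have h1 : g y ^ 2 ≤ C ^ (((1:ℝ)/4)^k * (1/2)) :=
          (hrec y).trans ((Real.sqrt_le_sqrt (ih (y+y))).trans_eq
            (by rw [Real.sqrt_eq_rpow, ← Real.rpow_mul hCpos.le]))
        calc g y = Real.sqrt (g y ^ 2) := (Real.sqrt_sq (hgnn y)).symm
          _ ≤ Real.sqrt (C ^ (((1:ℝ)/4)^k * (1/2))) := Real.sqrt_le_sqrt h1
          _ = C ^ (((1:ℝ)/4)^k * (1/2) * (1/2)) := by
              rw [Real.sqrt_eq_rpow, ← Real.rpow_mul hCpos.le]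
          _ = C ^ (((1:ℝ)/4)^(k+1)) := by
              rw [pow_succ]
              ring_nf
  have hlim : Filter.Tendsto (fun k : ℕ => C ^ (((1:ℝ)/4)^k)) Filter.atTop (nhds 1) := by
    have h0 : Filter.Tendsto (fun k : ℕ => ((1:ℝ)/4)^k) Filter.atTop (nhds 0) :=
      tendsto_pow_atTop_nhds_zero_of_lt_one (by norm_num) (by norm_num)
    have h1 : Filter.Tendsto (fun k : ℕ => Real.exp (Real.log C * ((1:ℝ)/4)^k))
        Filter.atTop (nhds (Real.exp (Real.log C * 0))) :=
      (Real.continuous_exp.tendsto _).comp (h0.const_mul (Real.log C))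
    simp only [mul_zero, Real.exp_zero] at h1
    refine h1.congr fun k => ?_
    rw [Real.rpow_def_of_pos hCpos]
  have hx1 : g x ≤ 1 := ge_of_tendsto' hlim (fun k => main k x)
  calc rho b s x = g x * ρ0 := by rw [hg]; field_simp
    _ ≤ 1 * ρ0 := mul_le_mul_of_nonneg_right hx1 hρ0pos.le
    _ = ρ0 := one_mul _

lemma two_add_sq_le (θ : ℝ) : 2 + θ^2 ≤ Real.exp θ + Real.exp (-θ) := by
  have h2 : Real.cosh θ = 1 + 2 * Real.sinh (θ/2)^2 := by
    have ha : θ = 2 * (θ/2) := by ring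
    rw [ha, Real.cosh_two_mul, Real.cosh_sq]
    ring
  have h1 : (θ/2)^2 ≤ Real.sinh (θ/2)^2 := by
    rcases le_total 0 θ with h | h
    · have : θ/2 ≤ Real.sinh (θ/2) := Real.self_le_sinh_iff.2 (by linarith)
      nlinarith [this, Real.sinh_nonneg_iff.2 (by linarith : (0:ℝ) ≤ θ/2)]
    · have hneg : Real.sinh (θ/2) ≤ θ/2 := Real.sinh_le_self_iff.2 (by linarith)
      have hs : Real.sinh (θ/2) ≤ 0 := Real.sinh_nonpos_iff.2 (by linarith)
      nlinarith
  have h3 := Real.cosh_eq θ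
  nlinarith [h1, h2, h3]

lemma sq_mul_gg_le {t : ℝ} (ht : 0 < t) (m : Fin n → ℤ) :
    ‖Q b m‖^2 * gg b t 0 m ≤ 2/(π*t) * gg b (t/2) 0 m := by
  have hπt : 0 < π * t := by positivity
  set A := ‖Q b m‖^2 with hA
  have hA0 : 0 ≤ A := sq_nonneg _
  have h1 : π*t/2 * A + 1 ≤ Real.exp (π*t/2 * A) := Real.add_one_le_exp _
  have h2 : A ≤ 2/(π*t) * Real.exp (π*t/2 * A) := by
    rw [div_mul_eq_mul_div, le_div_iff₀ hπt]
    nlinarith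
  have h3 : gg b t 0 m = Real.exp (-(π*t*A)) := by
    rw [gg, add_zero]
    ring_nf
    rw [hA]
  have h4 : gg b (t/2) 0 m = Real.exp (-(π*t/2*A)) := by
    rw [gg, add_zero]
    ring_nf
    rw [hA]
  rw [h3, h4]
  calc A * Real.exp (-(π*t*A))
      ≤ (2/(π*t) * Real.exp (π*t/2 * A)) * Real.exp (-(π*t*A)) :=
        mul_le_mul_of_nonneg_right h2 (Real.exp_pos _).le
    _ = 2/(π*t) * Real.exp (-(π*t/2*A)) := by
        rw [mul_assoc, ← Real.exp_add]
        ring_nf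

lemma summable_sq_gg {t : ℝ} (ht : 0 < t) :
    Summable (fun m => ‖Q b m‖^2 * gg b t 0 m) := by
  refine Summable.of_nonneg_of_le
    (fun m => mul_nonneg (sq_nonneg _) (gg_pos b t 0 m).le)
    (fun m => sq_mul_gg_le b ht m)
    ((summable_gg b (by linarith : (0:ℝ) < t/2) 0).mul_left _)

lemma summable_inner_sq_gg {t : ℝ} (ht : 0 < t) (u : V) (hu : ‖u‖ = 1) :
    Summable (fun m => (inner ℝ u (Q b m) : ℝ)^2 * gg b t 0 m) := by
  refine Summable.of_nonneg_of_le
    (fun m => mul_nonneg (sq_nonneg _) (gg_pos b t 0 m).le) (fun m => ?_)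
    (summable_sq_gg b ht)
  have h1 : (inner ℝ u (Q b m) : ℝ)^2 ≤ ‖Q b m‖^2 := by
    have := abs_real_inner_le_norm u (Q b m)
    rw [hu, one_mul] at this
    calc (inner ℝ u (Q b m) : ℝ)^2 = |(inner ℝ u (Q b m) : ℝ)|^2 := (sq_abs _).symm
      _ ≤ ‖Q b m‖^2 := by nlinarith [abs_nonneg (inner ℝ u (Q b m) : ℝ)]
  exact mul_le_mul_of_nonneg_right h1 (gg_pos b t 0 m).le

lemma dir_bound {t : ℝ} (ht : 0 < t) (u : V) (hu : ‖u‖ = 1) :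
    ∑' m, (inner ℝ u (Q b m) : ℝ)^2 * gg b t 0 m ≤ rho b t 0 / (2 * π * t) := by
  set S := ∑' m, (inner ℝ u (Q b m) : ℝ)^2 * gg b t 0 m with hS
  set ρ0 := rho b t 0 with hρ0
  have hρ0nn : 0 ≤ ρ0 := rho_nonneg b t 0
  have hSnn : 0 ≤ S := tsum_nonneg fun m => mul_nonneg (sq_nonneg _) (gg_pos b t 0 m).le
  have hbound : ∀ ε : ℝ, 0 < ε →
      S ≤ ((Real.exp (π*t*ε^2) - 1)/(π*t*ε^2)) * (ρ0/(2*π*t)) := by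
    intro ε hε
    have hεsq : 0 < π*t*ε^2 := by positivity
    -- pointwise inequality
    have hpt : ∀ m, Real.exp (-(π*t*ε^2)) * ((2 + (2*π*t*ε*(inner ℝ u (Q b m):ℝ))^2) * gg b t 0 m)
        ≤ gg b t (ε • u) m + gg b t (-(ε • u)) m := by
      intro m
      set θ : ℝ := 2*π*t*ε*(inner ℝ u (Q b m):ℝ) with hθ
      have e1 : gg b t (ε • u) m = gg b t 0 m * Real.exp (-(π*t*ε^2)) * Real.exp (-θ) := by
        rw [gg, gg, add_zero, norm_add_sq_real, ← Real.exp_add, ← Real.exp_add]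
        congr 1
        rw [real_inner_smul_right, norm_smul, real_inner_comm]
        simp only [Real.norm_eq_abs, hu, mul_one]
        rw [sq_abs]
        ring
      have e2 : gg b t (-(ε • u)) m = gg b t 0 m * Real.exp (-(π*t*ε^2)) * Real.exp θ := by
        rw [gg, gg, add_zero, norm_add_sq_real, ← Real.exp_add, ← Real.exp_add]
        congr 1
        rw [inner_neg_right, real_inner_smul_right, norm_neg, norm_smul, real_inner_comm]
        simp only [Real.norm_eq_abs, hu, mul_one]
        rw [sq_abs]
        ring
      rw [e1, e2]
      have hcosh := two_add_sq_le θ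
      have hge : 0 < gg b t 0 m * Real.exp (-(π*t*ε^2)) :=
        mul_pos (gg_pos b t 0 m) (Real.exp_pos _)
      calc Real.exp (-(π*t*ε^2)) * ((2 + θ^2) * gg b t 0 m)
          = (gg b t 0 m * Real.exp (-(π*t*ε^2))) * (2 + θ^2) := by ring
        _ ≤ (gg b t 0 m * Real.exp (-(π*t*ε^2))) * (Real.exp θ + Real.exp (-θ)) :=
            mul_le_mul_of_nonneg_left hcosh hge.le
        _ = gg b t 0 m * Real.exp (-(π*t*ε^2)) * Real.exp (-θ)
            + gg b t 0 m * Real.exp (-(π*t*ε^2)) * Real.exp θ := by ring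
    -- summability
    have hs1 : Summable (fun m => gg b t (ε • u) m) := summable_gg b ht _
    have hs2 : Summable (fun m => gg b t (-(ε • u)) m) := summable_gg b ht _
    have hsθ : Summable (fun m => (2*π*t*ε)^2 * ((inner ℝ u (Q b m):ℝ)^2 * gg b t 0 m)) :=
      (summable_inner_sq_gg b ht u hu).mul_left _
    have hs0 : Summable (fun m => (2:ℝ) * gg b t 0 m) := (summable_gg b ht 0).mul_left _
    have hsum_lhs : Summable (fun m => (2 + (2*π*t*ε*(inner ℝ u (Q b m):ℝ))^2) * gg b t 0 m) := by
      refine (hs0.add hsθ).congr fun m => ?_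
      ring
    -- tsum inequality
    have h6 : Real.exp (-(π*t*ε^2)) * (2 * ρ0 + (2*π*t*ε)^2 * S) ≤ 2 * ρ0 := by
      have hT : ∑' m, Real.exp (-(π*t*ε^2)) * ((2 + (2*π*t*ε*(inner ℝ u (Q b m):ℝ))^2) * gg b t 0 m)
          ≤ ∑' m, (gg b t (ε • u) m + gg b t (-(ε • u)) m) :=
        Summable.tsum_le_tsum hpt (hsum_lhs.mul_left _) (hs1.add hs2)
      have hL : ∑' m, Real.exp (-(π*t*ε^2)) * ((2 + (2*π*t*ε*(inner ℝ u (Q b m):ℝ))^2) * gg b t 0 m)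
          = Real.exp (-(π*t*ε^2)) * (2 * ρ0 + (2*π*t*ε)^2 * S) := by
        rw [tsum_mul_left]
        congr 1
        have e1 : ∑' m, (2 + (2*π*t*ε*(inner ℝ u (Q b m):ℝ))^2) * gg b t 0 m
            = ∑' m, ((2:ℝ) * gg b t 0 m
              + (2*π*t*ε)^2 * ((inner ℝ u (Q b m):ℝ)^2 * gg b t 0 m)) :=
          tsum_congr fun m => by ring
        rw [e1, Summable.tsum_add hs0 hsθ, tsum_mul_left, tsum_mul_left]
        rfl
      have hR : ∑' m, (gg b t (ε • u) m + gg b t (-(ε • u)) m) ≤ 2 * ρ0 := by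
        rw [Summable.tsum_add hs1 hs2]
        have r1 : rho b t (ε • u) ≤ ρ0 := rho_le_rho_zero b ht _
        have r2 : rho b t (-(ε • u)) ≤ ρ0 := rho_le_rho_zero b ht _
        show rho b t (ε • u) + rho b t (-(ε • u)) ≤ 2 * ρ0
        linarith
      rw [hL] at hT
      exact hT.trans hR
    have h7 : (2*π*t*ε)^2 * S ≤ 2*ρ0 * (Real.exp (π*t*ε^2) - 1) := by
      have hpos : (0:ℝ) < Real.exp (π*t*ε^2) := Real.exp_pos _
      have := mul_le_mul_of_nonneg_left h6 hpos.le
      rw [← mul_assoc, ← Real.exp_add, add_neg_cancel, Real.exp_zero, one_mul] at this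
      nlinarith
    have hKpos : (0:ℝ) < (2*π*t*ε)^2 := by positivity
    have h8 : S ≤ 2*ρ0 * (Real.exp (π*t*ε^2) - 1) / (2*π*t*ε)^2 := by
      rw [le_div_iff₀ hKpos]
      linarith [h7]
    refine h8.trans (le_of_eq ?_)
    have hπ : (π:ℝ) ≠ 0 := Real.pi_ne_zero
    field_simp
  -- limit as ε → 0⁺
  have hslope : Filter.Tendsto (fun z : ℝ => (Real.exp z - 1)/z) (𝓝[≠] (0:ℝ)) (𝓝 1) := by
    have h := Real.hasDerivAt_exp 0
    rw [hasDerivAt_iff_tendsto_slope] at h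
    simp only [Real.exp_zero] at h
    refine h.congr fun z => ?_
    simp [slope_def_field]
  have hmap : Filter.Tendsto (fun ε : ℝ => π*t*ε^2) (𝓝[>] (0:ℝ)) (𝓝[≠] (0:ℝ)) := by
    rw [tendsto_nhdsWithin_iff]
    constructor
    · apply tendsto_nhdsWithin_of_tendsto_nhds
      have hc : Continuous (fun ε : ℝ => π*t*ε^2) := by continuity
      have := hc.tendsto 0
      simpa using this
    · filter_upwards [self_mem_nhdsWithin] with ε hε
      have : (0:ℝ) < π*t*ε^2 := by
        have hε' : 0 < ε := hε
        positivity
      exact this.ne'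
  have hT := (hslope.comp hmap).mul_const (ρ0/(2*π*t))
  rw [one_mul] at hT
  refine ge_of_tendsto hT ?_
  filter_upwards [self_mem_nhdsWithin] with ε hε
  exact hbound ε hε
end

theorem weighted_gaussian_sum_le
    {V : Type*} [NormedAddCommGroup V] [InnerProductSpace ℝ V]
    {n : ℕ} (b : Module.Basis (Fin n) ℝ V) (t : ℝ) (ht : 0 < t) :
    (∑' m : Fin n → ℤ, ‖∑ i, m i • b i‖ ^ 2 * Real.exp (-Real.pi * t * ‖∑ i, m i • b i‖ ^ 2))
      ≤ (n / (2 * Real.pi * t)) *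
        ∑' m : Fin n → ℤ, Real.exp (-Real.pi * t * ‖∑ i, m i • b i‖ ^ 2) := by
  have hfd : FiniteDimensional ℝ V := b.finiteDimensional_of_finite
  set o := stdOrthonormalBasis ℝ V with ho
  have hrank : Module.finrank ℝ V = n := by
    rw [Module.finrank_eq_card_basis b, Fintype.card_fin]
  have hgg : ∀ m : Fin n → ℤ, Real.exp (-π*t*‖Q b m‖^2) = gg b t 0 m := fun m => by
    rw [gg, add_zero]
  have hρ : (∑' m : Fin n → ℤ, Real.exp (-π * t * ‖∑ i, m i • b i‖ ^ 2)) = rho b t 0 :=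
    tsum_congr fun m => hgg m
  have honorm : ∀ i, ‖o i‖ = 1 := fun i => (stdOrthonormalBasis ℝ V).orthonormal.1 i
  have hnorm : ∀ v : V, ‖v‖^2 = ∑ i, (inner ℝ (o i) v : ℝ)^2 := by
    intro v
    have h := o.sum_inner_mul_inner v v
    rw [← real_inner_self_eq_norm_sq, ← h]
    refine Finset.sum_congr rfl fun i _ => ?_
    rw [real_inner_comm v (o i), sq]
  have hpoint : ∀ m : Fin n → ℤ, ‖∑ i, m i • b i‖ ^ 2 * Real.exp (-π * t * ‖∑ i, m i • b i‖ ^ 2)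
      = ∑ i, ((inner ℝ (o i) (Q b m) : ℝ)^2 * gg b t 0 m) := by
    intro m
    have h1 : (∑ i, m i • b i) = Q b m := rfl
    rw [h1, hgg, hnorm (Q b m), Finset.sum_mul]
  rw [hρ]
  calc (∑' m : Fin n → ℤ, ‖∑ i, m i • b i‖ ^ 2 * Real.exp (-π * t * ‖∑ i, m i • b i‖ ^ 2))
      = ∑' m : Fin n → ℤ, ∑ i, ((inner ℝ (o i) (Q b m) : ℝ)^2 * gg b t 0 m) :=
        tsum_congr hpoint
    _ = ∑ i, ∑' m : Fin n → ℤ, ((inner ℝ (o i) (Q b m) : ℝ)^2 * gg b t 0 m) :=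
        Summable.tsum_finsetSum (fun i _ => summable_inner_sq_gg b ht (o i) (honorm i))
    _ ≤ ∑ i : Fin (Module.finrank ℝ V), rho b t 0 / (2 * π * t) :=
        Finset.sum_le_sum fun i _ => dir_bound b ht (o i) (honorm i)
    _ = (Module.finrank ℝ V : ℝ) * (rho b t 0 / (2 * π * t)) := by
        rw [Finset.sum_const, Finset.card_univ, Fintype.card_fin, nsmul_eq_mul]
    _ = (n / (2 * π * t)) * rho b t 0 := by
        rw [hrank]
        ring
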